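/- Let X be a centered K-subgaussian random vector in ℝ^d, and let 0 < a < 1/(2K²). Then E[exp(a‖X‖²)] ≤ (1 − 2K²a)^{−d/2}. In particular, taking a = 1/(4K²) gives E[exp(‖X‖²/(4K²))] ≤ 2^{d/2}. -/

import Mathlib

open MeasureTheory

noncomputable def gp (t : ℝ) : ℝ := Real.exp (-t ^ 2 / 2) / Real.sqrt (2 * Real.pi)

lemma gp_nonneg (t : ℝ) : 0 ≤ gp t :=
  div_nonneg (Real.exp_nonneg _) (Real.sqrt_nonneg _)

lemma gp_continuous : Continuous gp := by
  unfold gp; fun_prop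

lemma integrable_exp_neg_sq_add {b : ℝ} (hb : 0 < b) (s : ℝ) :
    Integrable (fun x : ℝ => Real.exp (-b * x ^ 2 + s * x)) := by
  have key : ∀ x : ℝ, Real.exp (-b * x ^ 2 + s * x)
      = Real.exp (s ^ 2 / (4 * b)) * Real.exp (-b * (x - s / (2 * b)) ^ 2) := by
    intro x
    rw [← Real.exp_add]
    congr 1
    field_simp
    ring
  simp_rw [key]
  exact ((integrable_exp_neg_mul_sq hb).comp_sub_right (s / (2 * b))).const_mul _

lemma integral_exp_neg_sq_add {b : ℝ} (hb : 0 < b) (s : ℝ) :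
    ∫ x : ℝ, Real.exp (-b * x ^ 2 + s * x)
      = Real.sqrt (Real.pi / b) * Real.exp (s ^ 2 / (4 * b)) := by
  have key : ∀ x : ℝ, Real.exp (-b * x ^ 2 + s * x)
      = Real.exp (s ^ 2 / (4 * b)) * Real.exp (-b * (x - s / (2 * b)) ^ 2) := by
    intro x
    rw [← Real.exp_add]
    congr 1
    field_simp
    ring
  simp_rw [key]
  rw [integral_const_mul,
    integral_sub_right_eq_self (fun x : ℝ => Real.exp (-b * x ^ 2)) (s / (2 * b)),
    integral_gaussian, mul_comm]

lemma gp_exp_lin_eq (s : ℝ) : ∀ t : ℝ,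
    gp t * Real.exp (s * t)
      = (Real.sqrt (2 * Real.pi))⁻¹ * Real.exp (-(1/2 : ℝ) * t ^ 2 + s * t) := by
  intro t
  unfold gp
  rw [div_eq_mul_inv, mul_comm (Real.exp _) _, mul_assoc, ← Real.exp_add]
  ring_nf

lemma integrable_gp_exp_lin (s : ℝ) :
    Integrable (fun t : ℝ => gp t * Real.exp (s * t)) := by
  simp_rw [gp_exp_lin_eq s]
  exact (integrable_exp_neg_sq_add (by norm_num) s).const_mul _

lemma integral_gp_exp_lin (s : ℝ) :
    ∫ t : ℝ, gp t * Real.exp (s * t) = Real.exp (s ^ 2 / 2) := by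
  simp_rw [gp_exp_lin_eq s]
  rw [integral_const_mul, integral_exp_neg_sq_add (by norm_num) s]
  have h2 : Real.pi / (1/2 : ℝ) = 2 * Real.pi := by ring
  rw [h2, ← mul_assoc, inv_mul_cancel₀ (by positivity : Real.sqrt (2 * Real.pi) ≠ 0), one_mul]
  norm_num

lemma gp_exp_sq_eq (b : ℝ) : ∀ t : ℝ,
    gp t * Real.exp (b * t ^ 2)
      = (Real.sqrt (2 * Real.pi))⁻¹ * Real.exp (-(1/2 - b) * t ^ 2 + 0 * t) := by
  intro t
  unfold gp
  rw [div_eq_mul_inv, mul_comm (Real.exp _) _, mul_assoc, ← Real.exp_add]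
  ring_nf

lemma integrable_gp_exp_sq {b : ℝ} (hb : b < 1/2) :
    Integrable (fun t : ℝ => gp t * Real.exp (b * t ^ 2)) := by
  simp_rw [gp_exp_sq_eq b]
  exact (integrable_exp_neg_sq_add (by linarith) 0).const_mul _

lemma integral_gp_exp_sq {b : ℝ} (hb : b < 1/2) :
    ∫ t : ℝ, gp t * Real.exp (b * t ^ 2) = ((1 - 2*b)⁻¹) ^ ((1:ℝ)/2) := by
  simp_rw [gp_exp_sq_eq b]
  rw [integral_const_mul, integral_exp_neg_sq_add (by linarith) 0]
  have h1 : (0:ℝ) ^ 2 / (4 * (1/2 - b)) = 0 := by simp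
  rw [h1, Real.exp_zero, mul_one]
  have hb' : (0:ℝ) < 1/2 - b := by linarith
  rw [← Real.sqrt_eq_rpow]
  rw [show (1 - 2*b)⁻¹ = (2 * Real.pi)⁻¹ * (Real.pi / (1/2 - b)) by
    rw [div_eq_mul_inv, ← mul_assoc]
    rw [show (2 * Real.pi)⁻¹ * Real.pi = (2:ℝ)⁻¹ by
      rw [mul_inv, mul_assoc, inv_mul_cancel₀ Real.pi_ne_zero, mul_one]]
    rw [← mul_inv]
    congr 1
    ring]
  rw [show √((2 * Real.pi)⁻¹ * (Real.pi / (1/2 - b)))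
      = (√(2 * Real.pi))⁻¹ * √(Real.pi / (1/2 - b)) by
    rw [Real.sqrt_mul (by positivity : (0:ℝ) ≤ (2 * Real.pi)⁻¹) (Real.pi / (1/2 - b)),
      Real.sqrt_inv]]

section Pi

variable {d : ℕ}

lemma int_pi_lin_eq (c : ℝ) (x : Fin d → ℝ) : ∀ g : Fin d → ℝ,
    (∏ i, gp (g i)) * Real.exp (c * ∑ i, x i * g i)
      = ∏ i, (gp (g i) * Real.exp ((c * x i) * g i)) := by
  intro g
  rw [Finset.prod_mul_distrib, ← Real.exp_sum, Finset.mul_sum]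
  congr 2
  exact Finset.sum_congr rfl fun i _ => by ring

lemma integrable_pi_lin (c : ℝ) (x : Fin d → ℝ) :
    Integrable (fun g : Fin d → ℝ =>
      (∏ i, gp (g i)) * Real.exp (c * ∑ i, x i * g i)) := by
  simp_rw [int_pi_lin_eq c x]
  exact Integrable.fintype_prod (f := fun i t => gp t * Real.exp ((c * x i) * t))
    (fun i => integrable_gp_exp_lin (c * x i))

lemma integral_pi_lin (c : ℝ) (x : Fin d → ℝ) :
    ∫ g : Fin d → ℝ, (∏ i, gp (g i)) * Real.exp (c * ∑ i, x i * g i)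
      = Real.exp ((c ^ 2 / 2) * ∑ i, (x i) ^ 2) := by
  simp_rw [int_pi_lin_eq c x]
  rw [integral_fintype_prod_volume_eq_prod (f := fun i t => gp t * Real.exp ((c * x i) * t))]
  have h : ∀ i : Fin d, ∫ t : ℝ, gp t * Real.exp ((c * x i) * t)
      = Real.exp ((c ^ 2 / 2) * (x i) ^ 2) := by
    intro i
    rw [integral_gp_exp_lin (c * x i)]
    congr 1
    ring
  simp_rw [h]
  rw [← Real.exp_sum, Finset.mul_sum]

lemma integrable_pi_sq {b : ℝ} (hb : b < 1/2) :
    Integrable (fun g : Fin d → ℝ =>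
      (∏ i, gp (g i)) * Real.exp (b * ∑ i, (g i) ^ 2)) := by
  have h : ∀ g : Fin d → ℝ, (∏ i, gp (g i)) * Real.exp (b * ∑ i, (g i) ^ 2)
      = ∏ i, (gp (g i) * Real.exp (b * (g i) ^ 2)) := by
    intro g
    rw [Finset.prod_mul_distrib, ← Real.exp_sum, Finset.mul_sum]
  simp_rw [h]
  exact Integrable.fintype_prod (f := fun _ t => gp t * Real.exp (b * t ^ 2))
    (fun _ => integrable_gp_exp_sq hb)

lemma integral_pi_sq {b : ℝ} (hb : b < 1/2) :
    ∫ g : Fin d → ℝ, (∏ i, gp (g i)) * Real.exp (b * ∑ i, (g i) ^ 2)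
      = ((1 - 2*b)⁻¹) ^ ((d : ℝ)/2) := by
  have h : ∀ g : Fin d → ℝ, (∏ i, gp (g i)) * Real.exp (b * ∑ i, (g i) ^ 2)
      = ∏ i, (gp (g i) * Real.exp (b * (g i) ^ 2)) := by
    intro g
    rw [Finset.prod_mul_distrib, ← Real.exp_sum, Finset.mul_sum]
  simp_rw [h]
  rw [integral_fintype_prod_volume_eq_pow (ι := Fin d) (fun t => gp t * Real.exp (b * t ^ 2)),
    integral_gp_exp_sq hb, Fintype.card_fin,
    ← Real.rpow_natCast (((1 - 2*b)⁻¹) ^ ((1:ℝ)/2)) d,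
    ← Real.rpow_mul (inv_nonneg.mpr (by linarith))]
  congr 1
  ring

end Pi

lemma euclid_norm_sq {d : ℕ} (x : EuclideanSpace ℝ (Fin d)) :
    ‖x‖ ^ 2 = ∑ i, (x i) ^ 2 := by
  rw [EuclideanSpace.norm_eq, Real.sq_sqrt (by positivity)]
  simp [sq_abs]

lemma subgaussian_aux
    {d : ℕ} {Ω : Type*} [MeasurableSpace Ω] (μ : Measure Ω) [IsProbabilityMeasure μ]
    (X : Ω → EuclideanSpace ℝ (Fin d)) (hX : Measurable X)
    (K : ℝ) (hK : 0 < K)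
    (hsg : ∀ θ : EuclideanSpace ℝ (Fin d),
      ∫ ω, Real.exp ((inner ℝ θ (X ω) : ℝ)) ∂μ ≤ Real.exp (K ^ 2 * ‖θ‖ ^ 2 / 2))
    (a : ℝ) (ha0 : 0 < a) (ha : a < 1 / (2 * K ^ 2)) :
    ∫ ω, Real.exp (a * ‖X ω‖ ^ 2) ∂μ ≤ (1 - 2 * K ^ 2 * a) ^ (-(d : ℝ) / 2) := by
  have hK2 : (0:ℝ) < K ^ 2 := by positivity
  have h2Ka : 2 * K ^ 2 * a < 1 := by
    have := (lt_div_iff₀ (by positivity : (0:ℝ) < 2 * K ^ 2)).mp ha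
    linarith
  have hbase : (0:ℝ) < 1 - 2 * K ^ 2 * a := by linarith
  set b := a * K ^ 2 with hbdef
  have hb : b < 1/2 := by rw [hbdef]; nlinarith
  have hbase' : 1 - 2 * b = 1 - 2 * K ^ 2 * a := by rw [hbdef]; ring
  have hrhs : ((1 - 2*b)⁻¹ : ℝ) ^ ((d : ℝ)/2) = (1 - 2 * K ^ 2 * a) ^ (-(d : ℝ) / 2) := by
    rw [hbase', Real.inv_rpow hbase.le, ← Real.rpow_neg hbase.le, neg_div]
  set c := Real.sqrt (2*a) with hcdef
  have hc2 : c ^ 2 = 2 * a := Real.sq_sqrt (by positivity)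
  set F : Ω → (Fin d → ℝ) → ℝ :=
    fun ω g => (∏ i, gp (g i)) * Real.exp (c * ∑ i, X ω i * g i) with hF
  have hFnonneg : ∀ ω g, 0 ≤ F ω g := fun ω g =>
    mul_nonneg (Finset.prod_nonneg fun i _ => gp_nonneg _) (Real.exp_nonneg _)
  have h1 : ∀ ω, ∫ g : Fin d → ℝ, F ω g = Real.exp (a * ‖X ω‖ ^ 2) := by
    intro ω
    rw [hF]
    rw [integral_pi_lin c (fun i => X ω i)]
    congr 1
    rw [euclid_norm_sq (X ω), hc2]
    ring
  by_cases hint : Integrable (fun ω => Real.exp (a * ‖X ω‖ ^ 2)) μ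
  swap
  · rw [integral_undef hint]
    exact Real.rpow_nonneg hbase.le _
  have hXi : ∀ i, Measurable fun ω => X ω i := fun i => (measurable_pi_apply i).comp ((WithLp.measurable_ofLp 2 _).comp hX)
  have hmeas : Measurable (Function.uncurry F) := by
    apply Measurable.mul
    · exact Finset.measurable_prod Finset.univ fun i _ =>
        gp_continuous.measurable.comp ((measurable_pi_apply i).comp measurable_snd)
    · exact Real.measurable_exp.comp (Measurable.const_mul
        (Finset.measurable_sum Finset.univ fun i _ =>
          ((hXi i).comp measurable_fst).mul ((measurable_pi_apply i).comp measurable_snd)) c)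
  have hprod : Integrable (Function.uncurry F) (μ.prod volume) := by
    rw [integrable_prod_iff hmeas.aestronglyMeasurable]
    constructor
    · exact ae_of_all _ fun ω => integrable_pi_lin c (fun i => X ω i)
    · have heq : (fun ω => ∫ g : Fin d → ℝ, ‖Function.uncurry F (ω, g)‖)
          = fun ω => Real.exp (a * ‖X ω‖ ^ 2) := by
        funext ω
        rw [← h1 ω]
        congr 1
        funext g
        exact Real.norm_of_nonneg (hFnonneg ω g)
      rwa [heq]
  have hswap : ∫ ω, ∫ g : Fin d → ℝ, F ω g ∂volume ∂μ = ∫ g : Fin d → ℝ, ∫ ω, F ω g ∂μ ∂volume :=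
    integral_integral_swap hprod
  have hbound : ∀ g : Fin d → ℝ,
      ∫ ω, F ω g ∂μ ≤ (∏ i, gp (g i)) * Real.exp (b * ∑ i, (g i) ^ 2) := by
    intro g
    have hpg : 0 ≤ ∏ i, gp (g i) := Finset.prod_nonneg fun i _ => gp_nonneg _
    rw [hF]
    rw [integral_const_mul]
    apply mul_le_mul_of_nonneg_left _ hpg
    set θ : EuclideanSpace ℝ (Fin d) := (WithLp.equiv 2 (Fin d → ℝ)).symm (fun i => c * g i)
      with hθ
    have hθapp : ∀ i, θ i = c * g i := fun i => rfl
    have hinner : ∀ ω, (inner ℝ θ (X ω) : ℝ) = c * ∑ i, X ω i * g i := by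
      intro ω
      rw [PiLp.inner_apply]
      simp only [RCLike.inner_apply, conj_trivial]
      rw [Finset.mul_sum]
      exact Finset.sum_congr rfl fun i _ => by rw [hθapp]; ring
    have hnormθ : K ^ 2 * ‖θ‖ ^ 2 / 2 = b * ∑ i, (g i) ^ 2 := by
      rw [euclid_norm_sq θ]
      have hsum : ∑ i, (θ i) ^ 2 = c ^ 2 * ∑ i, (g i) ^ 2 := by
        rw [Finset.mul_sum]
        exact Finset.sum_congr rfl fun i _ => by rw [hθapp]; ring
      rw [hsum, hc2, hbdef]
      ring
    calc ∫ ω, Real.exp (c * ∑ i, X ω i * g i) ∂μ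
        = ∫ ω, Real.exp ((inner ℝ θ (X ω) : ℝ)) ∂μ := by simp_rw [hinner]
      _ ≤ Real.exp (K ^ 2 * ‖θ‖ ^ 2 / 2) := hsg θ
      _ = Real.exp (b * ∑ i, (g i) ^ 2) := by rw [hnormθ]
  have hleft : Integrable (fun g : Fin d → ℝ => ∫ ω, F ω g ∂μ) volume :=
    hprod.integral_prod_right
  calc ∫ ω, Real.exp (a * ‖X ω‖ ^ 2) ∂μ
      = ∫ ω, ∫ g : Fin d → ℝ, F ω g ∂volume ∂μ := by simp_rw [h1]
    _ = ∫ g : Fin d → ℝ, ∫ ω, F ω g ∂μ ∂volume := hswap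
    _ ≤ ∫ g : Fin d → ℝ, (∏ i, gp (g i)) * Real.exp (b * ∑ i, (g i) ^ 2) :=
        integral_mono hleft (integrable_pi_sq hb) hbound
    _ = ((1 - 2*b)⁻¹) ^ ((d : ℝ)/2) := integral_pi_sq hb
    _ = (1 - 2 * K ^ 2 * a) ^ (-(d : ℝ) / 2) := hrhs

theorem subgaussian_squared_norm_mgf_bound
    {d : ℕ} {Ω : Type*} [MeasurableSpace Ω] (μ : Measure Ω) [IsProbabilityMeasure μ]
    (X : Ω → EuclideanSpace ℝ (Fin d)) (hX : Measurable X)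
    (hcentered : (∫ ω, X ω ∂μ) = 0) (K : ℝ) (hK : 0 < K)
    (hsg : ∀ θ : EuclideanSpace ℝ (Fin d),
      ∫ ω, Real.exp ((inner ℝ θ (X ω) : ℝ)) ∂μ ≤ Real.exp (K ^ 2 * ‖θ‖ ^ 2 / 2))
    (a : ℝ) (ha0 : 0 < a) (ha : a < 1 / (2 * K ^ 2)) :
    (∫ ω, Real.exp (a * ‖X ω‖ ^ 2) ∂μ ≤ (1 - 2 * K ^ 2 * a) ^ (-(d : ℝ) / 2)) ∧
    (∫ ω, Real.exp (‖X ω‖ ^ 2 / (4 * K ^ 2)) ∂μ ≤ (2 : ℝ) ^ ((d : ℝ) / 2)) := by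
  constructor
  · exact subgaussian_aux μ X hX K hK hsg a ha0 ha
  · have hK2 : (0:ℝ) < K ^ 2 := by positivity
    have ha0' : (0:ℝ) < 1/(4*K^2) := by positivity
    have ha' : 1/(4*K^2) < 1/(2*K^2) := by
      apply one_div_lt_one_div_of_lt (by positivity)
      nlinarith
    have hmain := subgaussian_aux μ X hX K hK hsg (1/(4*K^2)) ha0' ha'
    have heq : ∀ ω, Real.exp (‖X ω‖ ^ 2 / (4 * K ^ 2))
        = Real.exp (1/(4*K^2) * ‖X ω‖ ^ 2) := by
      intro ω
      congr 1
      rw [one_div, inv_mul_eq_div]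
    simp_rw [heq]
    refine hmain.trans_eq ?_
    rw [show (1 - 2 * K ^ 2 * (1/(4*K^2))) = (2:ℝ)⁻¹ by
      field_simp
      ring]
    rw [show (-(d:ℝ)/2) = -((d:ℝ)/2) from neg_div 2 (d:ℝ),
      Real.inv_rpow (by norm_num : (0:ℝ) ≤ 2),
      ← Real.rpow_neg (by norm_num : (0:ℝ) ≤ 2), neg_neg]
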